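/- For every state |ψ⟩ ∈ ℂ², (⟨+|⊗I)(I⊗T) Λ(Z) (|ψ⟩⊗|+⟩) = (1/√2) T H|ψ⟩. (T gadget of ancilla-driven quantum computation, measurement outcome 0: entangling the data qubit with an ancilla in |+⟩ by a controlled-Z, applying T to the ancilla, and projecting the data qubit onto |+⟩ leaves the ancilla in TH|ψ⟩ up to normalization 1/√2.) -/

import Mathlib

/-!
T gadget of ancilla-driven quantum computation, measurement outcome 0:
for every state |ψ⟩ ∈ ℂ², (⟨+|⊗I)(I⊗T) Λ(Z) (|ψ⟩⊗|+⟩) = (1/√2) TH|ψ⟩.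
-/

noncomputable section

/-- The state `|+⟩ = (|0⟩+|1⟩)/√2` on one qubit. -/
def ketPlus : EuclideanSpace ℂ (Fin 2) := WithLp.toLp 2 (fun _ => (Real.sqrt 2 : ℂ)⁻¹)

/-- The Hadamard gate `H` acting on one qubit: `H|0⟩ = |+⟩`, `H|1⟩ = |−⟩`. -/
def Happ (v : EuclideanSpace ℂ (Fin 2)) : EuclideanSpace ℂ (Fin 2) :=
  WithLp.toLp 2 (fun i => (Real.sqrt 2 : ℂ)⁻¹ * (v 0 + (-1 : ℂ) ^ (i : ℕ) * v 1))

/-- The gate `T = diag(1, e^{iπ/4})` acting on one qubit. -/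
def Tapp (v : EuclideanSpace ℂ (Fin 2)) : EuclideanSpace ℂ (Fin 2) :=
  WithLp.toLp 2 (fun i => (if i = 1 then Complex.exp (Complex.I * Real.pi / 4) else 1) * v i)

/-- The gate `I ⊗ T` on two qubits (T acting on the second qubit). -/
def TsndQubit (v : Fin 2 × Fin 2 → ℂ) : Fin 2 × Fin 2 → ℂ :=
  fun p => (if p.2 = 1 then Complex.exp (Complex.I * Real.pi / 4) else 1) * v p

/-- The tensor product `|ψ⟩ ⊗ |+⟩` on two qubits. -/
def tensorWithPlus (ψ : EuclideanSpace ℂ (Fin 2)) : Fin 2 × Fin 2 → ℂ :=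
  fun p => ψ p.1 * ketPlus p.2

/-- The controlled-Z gate `Λ(Z) = |0⟩⟨0|⊗I + |1⟩⟨1|⊗Z` on two qubits. -/
def CZ (v : Fin 2 × Fin 2 → ℂ) : Fin 2 × Fin 2 → ℂ :=
  fun p => (if p.1 = 1 ∧ p.2 = 1 then (-1 : ℂ) else 1) * v p

/-- The partial contraction `(⟨+|⊗I)` against the first qubit. -/
def braPlusFst (v : Fin 2 × Fin 2 → ℂ) : EuclideanSpace ℂ (Fin 2) :=
  WithLp.toLp 2 (fun j => (Real.sqrt 2 : ℂ)⁻¹ * (v (0, j) + v (1, j)))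

/-- T gadget, outcome 0: `(⟨+|⊗I)(I⊗T) Λ(Z) (|ψ⟩⊗|+⟩) = (1/√2) TH|ψ⟩`. -/
theorem T_gadget_outcome_zero (ψ : EuclideanSpace ℂ (Fin 2)) :
    braPlusFst (TsndQubit (CZ (tensorWithPlus ψ))) =
      (Real.sqrt 2 : ℂ)⁻¹ • Tapp (Happ ψ) := by
  ext j
  fin_cases j <;>
    simp [braPlusFst, TsndQubit, CZ, tensorWithPlus, ketPlus, Tapp, Happ,
      PiLp.smul_apply, smul_eq_mul] <;> ring

end
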